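/- Let I, Γ ⊂ ℤ^d be finite frequency sets, let k ∈ I ∪ Γ be fixed, and let M be a prime number such that the reduction map h ↦ h mod M (componentwise) is injective on I ∪ Γ. If z is drawn uniformly at random from ([0, M−1] ∩ ℤ)^d, then the probability that there exists h ∈ I \ {k} with (h − k)·z ≡ 0 (mod M) is at most |I| / M. -/
import Mathlib

open Finset in
private lemma count_solutions_mul_le (d M : ℕ) (hM : Nat.Prime M) (c : Fin d → ℤ)
    (t0 : Fin d) (hc : ¬ (M : ℤ) ∣ c t0) :
    (Finset.univ.filter fun z : Fin d → Fin M =>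
      (M : ℤ) ∣ ∑ t, c t * ((z t : ℕ) : ℤ)).card * M ≤ M ^ d := by
  classical
  have hd : 1 ≤ d := t0.pos
  have hMZ : Prime (M : ℤ) := Nat.prime_iff_prime_int.mp hM
  have hcard : (Finset.univ.filter fun z : Fin d → Fin M =>
      (M : ℤ) ∣ ∑ t, c t * ((z t : ℕ) : ℤ)).card ≤ M ^ (d - 1) := by
    have hle := Finset.card_le_card_of_injOn
      (s := Finset.univ.filter fun z : Fin d → Fin M =>
        (M : ℤ) ∣ ∑ t, c t * ((z t : ℕ) : ℤ))
      (t := (Finset.univ : Finset ({x : Fin d // x ≠ t0} → Fin M)))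
      (fun z (x : {x : Fin d // x ≠ t0}) => z x.1)
      (fun _ _ => Finset.mem_univ _)
      ?_
    · refine hle.trans ?_
      rw [Finset.card_univ, Fintype.card_fun, Fintype.card_fin]
      have : Fintype.card {x : Fin d // x ≠ t0} = d - 1 := by
        rw [Fintype.card_subtype_compl, Fintype.card_subtype_eq, Fintype.card_fin]
      rw [this]
    · intro z hz w hw hzw
      simp only [Finset.coe_filter, Set.mem_setOf_eq, Finset.mem_univ, true_and] at hz hw
      have hrest : ∀ t : Fin d, t ≠ t0 → z t = w t := fun t ht =>
        congrFun hzw ⟨t, ht⟩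
      have hdvd : (M : ℤ) ∣ c t0 * (((z t0 : ℕ) : ℤ) - ((w t0 : ℕ) : ℤ)) := by
        have hsum : (∑ t, c t * ((z t : ℕ) : ℤ)) - (∑ t, c t * ((w t : ℕ) : ℤ))
            = c t0 * (((z t0 : ℕ) : ℤ) - ((w t0 : ℕ) : ℤ)) := by
          rw [← Finset.sum_sub_distrib]
          rw [Finset.sum_eq_single t0]
          · ring
          · intro t _ ht
            rw [hrest t ht]; ring
          · intro h; exact absurd (Finset.mem_univ t0) h
        rw [← hsum]
        exact dvd_sub hz hw
      have hdvd2 : (M : ℤ) ∣ (((z t0 : ℕ) : ℤ) - ((w t0 : ℕ) : ℤ)) :=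
        ((hMZ.dvd_mul.mp hdvd).resolve_left hc)
      have heq0 : (((z t0 : ℕ) : ℤ) - ((w t0 : ℕ) : ℤ)) = 0 := by
        refine Int.eq_zero_of_abs_lt_dvd hdvd2 ?_
        have h1 : ((z t0 : ℕ) : ℤ) < M := by exact_mod_cast (z t0).2
        have h2 : ((w t0 : ℕ) : ℤ) < M := by exact_mod_cast (w t0).2
        have h3 : (0 : ℤ) ≤ ((z t0 : ℕ) : ℤ) := Int.ofNat_nonneg _
        have h4 : (0 : ℤ) ≤ ((w t0 : ℕ) : ℤ) := Int.ofNat_nonneg _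
        rw [abs_sub_lt_iff]
        constructor <;> omega
      have ht0 : z t0 = w t0 := by
        have : ((z t0 : ℕ) : ℤ) = ((w t0 : ℕ) : ℤ) := by omega
        exact Fin.ext (by exact_mod_cast this)
      funext t
      by_cases ht : t = t0
      · rw [ht]; exact ht0
      · exact hrest t ht
  calc (Finset.univ.filter fun z : Fin d → Fin M =>
      (M : ℤ) ∣ ∑ t, c t * ((z t : ℕ) : ℤ)).card * M
      ≤ M ^ (d - 1) * M := Nat.mul_le_mul_right M hcard
    _ = M ^ d := by
        rw [← pow_succ, Nat.sub_add_cancel hd]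

open scoped Classical in
/-- Single-lattice aliasing probability bound: for finite `I, Γ ⊂ ℤ^d`, a fixed `k ∈ I ∪ Γ`,
and a prime `M` such that componentwise reduction mod `M` is injective on `I ∪ Γ`, a uniformly
random `z ∈ {0,…,M-1}^d` produces aliasing of `k` to some `h ∈ I \ {k}` with probability at
most `|I|/M`; stated as `(number of bad z) * M ≤ |I| * M^d`. -/
theorem prob_alias_le (d M : ℕ) (hM : Nat.Prime M) (I Γ : Finset (Fin d → ℤ))
    (k : Fin d → ℤ) (hk : k ∈ I ∪ Γ)
    (hinj : Set.InjOn (fun h : Fin d → ℤ => fun t => h t % (M : ℤ)) ↑(I ∪ Γ)) :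
    ((Finset.univ.filter fun z : Fin d → Fin M =>
        ∃ h ∈ I.erase k, (M : ℤ) ∣ ∑ t, (h t - k t) * ((z t : ℕ) : ℤ)).card : ℝ) * M
      ≤ (I.card : ℝ) * (M : ℝ) ^ d := by
  classical
  -- for each h in I.erase k, a coordinate where h - k is not divisible by M
  have hterm : ∀ h ∈ I.erase k,
      (Finset.univ.filter fun z : Fin d → Fin M =>
        (M : ℤ) ∣ ∑ t, (h t - k t) * ((z t : ℕ) : ℤ)).card * M ≤ M ^ d := by
    intro h hh
    have hne : h ≠ k := Finset.ne_of_mem_erase hh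
    have hhI : h ∈ I ∪ Γ := Finset.mem_union_left _ (Finset.mem_of_mem_erase hh)
    have hmod : (fun t => h t % (M : ℤ)) ≠ fun t => k t % (M : ℤ) := by
      intro hcontra
      exact hne (hinj (by exact_mod_cast hhI) (by exact_mod_cast hk) hcontra)
    obtain ⟨t0, ht0⟩ := Function.ne_iff.mp hmod
    refine count_solutions_mul_le d M hM (fun t => h t - k t) t0 ?_
    intro hdvd
    have : h t0 ≡ k t0 [ZMOD (M : ℤ)] := (Int.modEq_iff_dvd.mpr hdvd).symm
    exact ht0 this
  -- union bound
  have hsub : (Finset.univ.filter fun z : Fin d → Fin M =>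
        ∃ h ∈ I.erase k, (M : ℤ) ∣ ∑ t, (h t - k t) * ((z t : ℕ) : ℤ))
      ⊆ (I.erase k).biUnion fun h =>
        Finset.univ.filter fun z : Fin d → Fin M =>
          (M : ℤ) ∣ ∑ t, (h t - k t) * ((z t : ℕ) : ℤ) := by
    intro z hz
    rw [Finset.mem_filter] at hz
    obtain ⟨-, h, hh, hdvd⟩ := hz
    exact Finset.mem_biUnion.mpr ⟨h, hh, Finset.mem_filter.mpr ⟨Finset.mem_univ _, hdvd⟩⟩
  have key : (Finset.univ.filter fun z : Fin d → Fin M =>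
        ∃ h ∈ I.erase k, (M : ℤ) ∣ ∑ t, (h t - k t) * ((z t : ℕ) : ℤ)).card * M
      ≤ I.card * M ^ d := by
    calc (Finset.univ.filter fun z : Fin d → Fin M =>
        ∃ h ∈ I.erase k, (M : ℤ) ∣ ∑ t, (h t - k t) * ((z t : ℕ) : ℤ)).card * M
        ≤ ((I.erase k).biUnion fun h =>
            Finset.univ.filter fun z : Fin d → Fin M =>
              (M : ℤ) ∣ ∑ t, (h t - k t) * ((z t : ℕ) : ℤ)).card * M :=
          Nat.mul_le_mul_right M (Finset.card_le_card hsub)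
      _ ≤ (∑ h ∈ I.erase k, (Finset.univ.filter fun z : Fin d → Fin M =>
              (M : ℤ) ∣ ∑ t, (h t - k t) * ((z t : ℕ) : ℤ)).card) * M :=
          Nat.mul_le_mul_right M Finset.card_biUnion_le
      _ = ∑ h ∈ I.erase k, (Finset.univ.filter fun z : Fin d → Fin M =>
              (M : ℤ) ∣ ∑ t, (h t - k t) * ((z t : ℕ) : ℤ)).card * M :=
          Finset.sum_mul ..
      _ ≤ ∑ _h ∈ I.erase k, M ^ d := Finset.sum_le_sum hterm
      _ = (I.erase k).card * M ^ d := by rw [Finset.sum_const, smul_eq_mul]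
      _ ≤ I.card * M ^ d :=
          Nat.mul_le_mul_right _ (Finset.card_le_card (Finset.erase_subset _ _))
  exact_mod_cast key
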